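/- Let f : X → ℝ be K-convex and L-Lipschitz with K, L > 0 on a geodesic space, attaining its minimum at p. For any x ∈ X, τ > 1/K, and y ∈ argmin_z { f(z) + d²(x,z)/(2τ) }, we have f(y) ≤ f(x) − (Kτ − 1)²(f(x) − f(p))²/(2(KL)²τ³). -/
import Mathlib


open Set

/-- Gromov product `(y|z)_x`. -/
noncomputable def gp {X : Type*} [MetricSpace X] (x y z : X) : ℝ :=
  (dist x y + dist x z - dist y z) / 2

/-- `δ`-hyperbolicity. -/
def IsDeltaHyp (X : Type*) [MetricSpace X] (δ : ℝ) : Prop :=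
  ∀ p x y z : X, gp p x z ≥ min (gp p x y) (gp p y z) - δ

/-- `γ` is a (constant-speed, unit-interval) geodesic from `x` to `y`. -/
def IsGeodesic {X : Type*} [MetricSpace X] (γ : ℝ → X) (x y : X) : Prop :=
  γ 0 = x ∧ γ 1 = y ∧
    ∀ s ∈ Icc (0:ℝ) 1, ∀ t ∈ Icc (0:ℝ) 1, dist (γ s) (γ t) = |s - t| * dist x y

/-- Geodesic space. -/
def GeodesicSpace (X : Type*) [MetricSpace X] : Prop :=
  ∀ x y : X, ∃ γ : ℝ → X, IsGeodesic γ x y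

/-- (Weak, geodesic) `K`-convexity. -/
def KConvex {X : Type*} [MetricSpace X] (K : ℝ) (f : X → ℝ) : Prop :=
  ∀ x y : X, ∃ γ : ℝ → X, IsGeodesic γ x y ∧
    ∀ t ∈ Icc (0:ℝ) 1,
      f (γ t) ≤ (1 - t) * f x + t * f y - K / 2 * (1 - t) * t * dist x y ^ 2

/-- `L`-Lipschitz continuity. -/
def LipschitzL {X : Type*} [MetricSpace X] (L : ℝ) (f : X → ℝ) : Prop :=
  ∀ x y : X, |f x - f y| ≤ L * dist x y

/-- `y` belongs to the proximal set `J^f_τ(x)`. -/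
def IsProx {X : Type*} [MetricSpace X] (f : X → ℝ) (τ : ℝ) (x y : X) : Prop :=
  ∀ z : X, f y + dist x y ^ 2 / (2 * τ) ≤ f z + dist x z ^ 2 / (2 * τ)

theorem prox_value_decrease {X : Type*} [MetricSpace X] {K L τ : ℝ}
    (hK : 0 < K) (hL : 0 < L) (hτ : 1 / K < τ)
    (hgeo : GeodesicSpace X) (f : X → ℝ)
    (hconv : KConvex K f) (hlip : LipschitzL L f)
    (p : X) (hp : ∀ z : X, f p ≤ f z)
    (x y : X) (hy : IsProx f τ x y) :
    f y ≤ f x - (K * τ - 1) ^ 2 * (f x - f p) ^ 2 / (2 * (K * L) ^ 2 * τ ^ 3) := by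

  obtain ⟨γ, hγ, hc⟩ := hconv x p
  obtain ⟨h0, h1, hdd⟩ := hγ
  have hτ0 : 0 < τ := lt_trans (by positivity) hτ
  have hKτ : 1 < K * τ := by
    rw [div_lt_iff₀ hK] at hτ; linarith
  set d := dist x p with hdxp
  have hd0 : 0 ≤ d := dist_nonneg
  have hA0 : 0 ≤ f x - f p := by linarith [hp x]
  have hAL : f x - f p ≤ L * d := le_trans (le_abs_self _) (hlip x p)
  have hmid : dist x (γ (1/2)) = d / 2 := by
    have h := hdd 0 (by norm_num) (1/2) (by norm_num)
    rw [h0] at h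
    rw [h, show |(0:ℝ) - 1/2| = 1/2 from by norm_num]; ring
  have hconv2 : f (γ (1/2)) ≤ (1/2) * f x + (1/2) * f p - K * d ^ 2 / 8 := by
    have h := hc (1/2) ⟨by norm_num, by norm_num⟩
    have e : K / 2 * (1 - 1/2) * (1/2) * d ^ 2 = K * d ^ 2 / 8 := by ring
    rw [e] at h; linarith
  have hprox := hy (γ (1/2))
  rw [hmid] at hprox
  have hxy : 0 ≤ dist x y ^ 2 / (2 * τ) := by positivity
  have e1 : (d / 2) ^ 2 / (2 * τ) = d ^ 2 / (8 * τ) := by ring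
  rw [e1] at hprox
  have e3 : d ^ 2 / (8 * τ) - K * d ^ 2 / 8 = -((K * τ - 1) * d ^ 2 / (8 * τ)) := by
    field_simp; ring
  have h2 : f y ≤ f x - (f x - f p) / 2 - (K * τ - 1) * d ^ 2 / (8 * τ) := by
    linarith
  have key : (K * τ - 1) ^ 2 * (f x - f p) ^ 2 / (2 * (K * L) ^ 2 * τ ^ 3)
      ≤ (K * τ - 1) * d ^ 2 / (8 * τ) := by
    rw [div_le_div_iff₀ (by positivity) (by positivity)]
    have hsq : (f x - f p) ^ 2 ≤ L ^ 2 * d ^ 2 := by nlinarith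
    nlinarith [sq_nonneg (K * τ - 2), mul_nonneg (mul_nonneg (sq_nonneg (K * τ - 2)) hτ0.le) (mul_nonneg (sq_nonneg L) (sq_nonneg d)), mul_nonneg (mul_nonneg (mul_nonneg (sub_nonneg.mpr hKτ.le) hτ0.le) (sq_nonneg (K * τ - 1))) (sub_nonneg.mpr hsq), sq_nonneg (K * τ - 1), mul_pos hτ0 hτ0]
  linarith
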